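/- For the gradient descent-ascent operator on the bilinear game, with Jacobian I - η∇v where ∇v = [[0,A],[-Aᵀ,0]], every eigenvalue has the form 1 - ηλ with λ purely imaginary and nonzero (for A invertible), and hence has modulus |1 - ηλ| = √(1 + η²|λ|²) > 1 for any η > 0. Therefore the spectral radius of the GDA update operator exceeds 1 for every positive learning rate. -/

import Mathlib

open Matrix

/-- Every eigenvalue of the GDA update Jacobian I - η∇v for the bilinear game
(with A invertible) has the form 1 - ηλ with λ purely imaginary and nonzero, hence
modulus √(1+η²|λ|²) > 1: the spectral radius of GDA exceeds 1 for every η > 0. -/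
theorem gda_spectral_radius_exceeds_one
    (n : ℕ) (A : Matrix (Fin n) (Fin n) ℝ) (hA : IsUnit A.det)
    (η : ℝ) (hη : 0 < η) (c : ℂ)
    (hc : ∃ z : (Fin n ⊕ Fin n) → ℂ, z ≠ 0 ∧
      (((1 : Matrix (Fin n ⊕ Fin n) (Fin n ⊕ Fin n) ℝ)
          - η • Matrix.fromBlocks 0 A (-Aᵀ) 0).map (Complex.ofReal)).mulVec z = c • z) :
    ∃ lam : ℂ, lam.re = 0 ∧ lam ≠ 0 ∧ c = 1 - η * lam ∧
      ‖c‖ = Real.sqrt (1 + η ^ 2 * ‖lam‖ ^ 2) ∧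
      1 < ‖c‖ := by
  classical
  obtain ⟨z, hz0, heq⟩ := hc
  set M : Matrix (Fin n ⊕ Fin n) (Fin n ⊕ Fin n) ℝ := Matrix.fromBlocks 0 A (-Aᵀ) 0 with hM
  set Mc : Matrix (Fin n ⊕ Fin n) (Fin n ⊕ Fin n) ℂ := M.map Complex.ofReal with hMc
  set lam : ℂ := (1 - c) / (η : ℂ) with hlam
  have hηC : (η : ℂ) ≠ 0 := by exact_mod_cast hη.ne'
  -- rewrite the eigen equation
  have hmap : ((1 : Matrix (Fin n ⊕ Fin n) (Fin n ⊕ Fin n) ℝ) - η • M).map Complex.ofReal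
      = 1 - (η : ℂ) • Mc := by
    ext i j
    by_cases h : i = j <;>
      simp [Matrix.map_apply, Matrix.one_apply, h, hMc]
  have heig : Mc.mulVec z = lam • z := by
    have h1 : (1 - (η : ℂ) • Mc).mulVec z = c • z := by rw [← hmap]; exact heq
    rw [Matrix.sub_mulVec, Matrix.one_mulVec, Matrix.smul_mulVec] at h1
    have h2 : (η : ℂ) • Mc.mulVec z = (1 - c) • z := by
      rw [sub_smul, one_smul, ← h1]; abel
    have h3 := congrArg (fun v => ((η : ℂ)⁻¹) • v) h2
    simp only [smul_smul, inv_mul_cancel₀ hηC, one_smul] at h3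
    rw [h3, hlam, div_eq_mul_inv, mul_comm]
  -- skew symmetry
  have hskew : ∀ i j, M i j = - M j i := by
    intro i j
    cases i <;> cases j <;> simp [hM, Matrix.fromBlocks, Matrix.transpose_apply]
  -- the quadratic form
  set s : ℂ := ∑ i, (starRingEnd ℂ) (z i) * (Mc.mulVec z i) with hs_def
  set N : ℝ := ∑ i, Complex.normSq (z i) with hN
  have hNpos : 0 < N := by
    have hex : ∃ i, z i ≠ 0 := by
      by_contra h; push_neg at h; exact hz0 (funext h)
    obtain ⟨i, hi⟩ := hex
    exact Finset.sum_pos' (fun j _ => Complex.normSq_nonneg _)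
      ⟨i, Finset.mem_univ i, Complex.normSq_pos.2 hi⟩
  have hsum1 : s = lam * (N : ℂ) := by
    rw [hs_def, heig, hN]
    push_cast
    rw [Finset.mul_sum]
    refine Finset.sum_congr rfl fun i _ => ?_
    simp only [Pi.smul_apply, smul_eq_mul]
    rw [← Complex.mul_conj]
    ring
  have hs : s = ∑ i, ∑ j, (starRingEnd ℂ) (z i) * (M i j : ℂ) * z j := by
    rw [hs_def]
    refine Finset.sum_congr rfl fun i _ => ?_
    rw [Matrix.mulVec, dotProduct, Finset.mul_sum]
    refine Finset.sum_congr rfl fun j _ => ?_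
    rw [hMc]
    simp [Matrix.map_apply]
    ring
  have hconj : (starRingEnd ℂ) s = -s := by
    calc (starRingEnd ℂ) s
        = ∑ j, ∑ i, z i * (M i j : ℂ) * (starRingEnd ℂ) (z j) := by
          rw [hs, map_sum, Finset.sum_comm]
          refine Finset.sum_congr rfl fun j _ => ?_
          rw [map_sum]
          refine Finset.sum_congr rfl fun i _ => ?_
          simp [_root_.map_mul, Complex.conj_ofReal]
      _ = ∑ j, ∑ i, -((starRingEnd ℂ) (z j) * (M j i : ℂ) * z i) := by
          refine Finset.sum_congr rfl fun j _ => Finset.sum_congr rfl fun i _ => ?_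
          rw [hskew i j]
          push_cast
          ring
      _ = -s := by
          rw [hs, ← Finset.sum_neg_distrib]
          refine Finset.sum_congr rfl fun j _ => ?_
          rw [← Finset.sum_neg_distrib]
  -- lam is purely imaginary
  have hNne : (N : ℂ) ≠ 0 := by exact_mod_cast hNpos.ne'
  have hconjlam : (starRingEnd ℂ) lam = -lam := by
    have h := hconj
    rw [hsum1, _root_.map_mul, Complex.conj_ofReal] at h
    have h0 : ((starRingEnd ℂ) lam + lam) * (N : ℂ) = 0 := by linear_combination h
    rcases mul_eq_zero.1 h0 with h' | h'
    · exact eq_neg_of_add_eq_zero_left h'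
    · exact absurd h' hNne
  have hre : lam.re = 0 := by
    have h := congrArg Complex.re hconjlam
    simp only [Complex.conj_re, Complex.neg_re] at h
    linarith
  have hlamne : lam ≠ 0 := by
    intro h0
    have hz' : Mc.mulVec z = 0 := by rw [heig, h0, zero_smul]
    set x : Fin n → ℂ := z ∘ Sum.inl with hx
    set y : Fin n → ℂ := z ∘ Sum.inr with hy
    have hzelim : z = Sum.elim x y := by funext i; cases i <;> rfl
    have hblocks : Mc = Matrix.fromBlocks 0 (A.map Complex.ofReal)
        ((-Aᵀ).map Complex.ofReal) 0 := by
      rw [hMc, hM, Matrix.fromBlocks_map]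
      congr 1 <;> try { ext i j; simp [Matrix.map_apply] }
    rw [hblocks, hzelim, Matrix.fromBlocks_mulVec] at hz'
    have hdetmap : (A.map Complex.ofReal).det = ((A.det : ℝ) : ℂ) := by
      have h := (Complex.ofRealHom : ℝ →+* ℂ).map_det A
      exact h.symm
    have hdetmap' : ((-Aᵀ).map Complex.ofReal).det = (((-Aᵀ).det : ℝ) : ℂ) := by
      have h := (Complex.ofRealHom : ℝ →+* ℂ).map_det (-Aᵀ)
      exact h.symm
    have hAdet : (A.map Complex.ofReal).det ≠ 0 := by
      rw [hdetmap]
      simpa using (isUnit_iff_ne_zero.mp hA)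
    have hAdet' : ((-Aᵀ).map Complex.ofReal).det ≠ 0 := by
      rw [hdetmap']
      simp only [Matrix.det_neg, Matrix.det_transpose]
      push_cast
      intro h
      rcases mul_eq_zero.1 h with h' | h'
      · exact (pow_ne_zero (Fintype.card (Fin n)) (by norm_num : (-1:ℂ) ≠ 0)) h'
      · exact (by simpa using (isUnit_iff_ne_zero.mp hA) : (A.det : ℂ) ≠ 0) h'
    have hy0 : y = 0 := by
      have h1 : (A.map Complex.ofReal).mulVec y = 0 := by
        funext i
        have := congrFun hz' (Sum.inl i)
        simpa [Matrix.zero_mulVec] using this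
      have hinj := (Matrix.mulVec_injective_iff_isUnit.2 ((Matrix.isUnit_iff_isUnit_det _).2 (isUnit_iff_ne_zero.2 hAdet)))
      exact hinj (by rw [h1, Matrix.mulVec_zero])
    have hx0 : x = 0 := by
      have h1 : ((-Aᵀ).map Complex.ofReal).mulVec x = 0 := by
        funext i
        have := congrFun hz' (Sum.inr i)
        simpa [Matrix.zero_mulVec] using this
      have hinj := (Matrix.mulVec_injective_iff_isUnit.2 ((Matrix.isUnit_iff_isUnit_det _).2 (isUnit_iff_ne_zero.2 hAdet')))
      exact hinj (by rw [h1, Matrix.mulVec_zero])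
    apply hz0
    rw [hzelim, hx0, hy0]
    funext i; cases i <;> rfl
  have hc' : c = 1 - η * lam := by
    rw [hlam]
    field_simp
    ring
  have habssq : ‖lam‖ ^ 2 = lam.im ^ 2 := by
    rw [Complex.sq_norm, Complex.normSq_apply, hre]; ring
  have habs : ‖c‖ = Real.sqrt (1 + η ^ 2 * ‖lam‖ ^ 2) := by
    rw [hc', Complex.norm_def, Complex.normSq_apply]
    congr 1
    have h1 : ((1 : ℂ) - ↑η * lam).re = 1 := by
      simp [Complex.sub_re, Complex.mul_re, hre]
    have h2 : ((1 : ℂ) - ↑η * lam).im = -(η * lam.im) := by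
      simp [Complex.sub_im, Complex.mul_im]
    rw [h1, h2, habssq]
    ring
  have him : lam.im ≠ 0 := by
    intro h
    exact hlamne (Complex.ext (by simp [hre]) (by simp [h]))
  have hgt : 1 < ‖c‖ := by
    rw [habs]
    have habspos : 0 < η ^ 2 * ‖lam‖ ^ 2 := by
      rw [habssq]
      positivity
    calc (1 : ℝ) = Real.sqrt 1 := by simp
      _ < Real.sqrt (1 + η ^ 2 * ‖lam‖ ^ 2) :=
        Real.sqrt_lt_sqrt (by norm_num) (by linarith)
  exact ⟨lam, hre, hlamne, hc', habs, hgt⟩
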